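/- Fix ρ > 0 and let X = X^{(p)} satisfy Assumption (DATA) with λ_k(Σ(X^{(p)})) > λ_{k+1}(Σ(X^{(p)})) for every p, and let the privatized estimators B_ρ(w², X) and T_ρ(w², X) and the oracle quantities σ²_min and β(w²) be as defined. Then: (1) for every w² ≥ σ²_min and every ε > 0 there is a constant C ∈ (0,∞), independent of p, such that P(|B_ρ(w², X^{(p)}) − β(w²)| > ε) ≤ C·e^{−p/C} for all p; (2) for every w² > σ²_min there is a constant C ∈ (0,∞) such that P(T_ρ(w², X^{(p)}) = 1) ≥ 1 − C·e^{−p/C} for all p; (3) for every w² < σ²_min there is a constant C ∈ (0,∞) such that P(T_ρ(w², X^{(p)}) = 0) ≥ 1 − C·e^{−p/C} for all p. -/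

import Mathlib

open MeasureTheory Matrix Filter Topology ProbabilityTheory
open scoped ENNReal NNReal

noncomputable section

/-- Entrywise (Borel) measurable space on real matrices. -/
instance matrixMeasurableSpace {m n : Type*} : MeasurableSpace (Matrix m n ℝ) :=
  MeasurableSpace.pi

/-- The Stiefel manifold `O(p,k)` of `p × k` real matrices with orthonormal columns. -/
def Stiefel (p k : ℕ) : Type :=
  {V : Matrix (Fin p) (Fin k) ℝ // Vᵀ * V = 1}

instance {p k : ℕ} : MeasurableSpace (Stiefel p k) :=
  inferInstanceAs (MeasurableSpace {V : Matrix (Fin p) (Fin k) ℝ // Vᵀ * V = 1})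

/-- Left rotation of a Stiefel point by an orthogonal matrix. -/
def stiefelRot {p k : ℕ} {A : Matrix (Fin p) (Fin p) ℝ} (hA : Aᵀ * A = 1)
    (V : Stiefel p k) : Stiefel p k :=
  ⟨A * V.1, by
    rw [Matrix.transpose_mul, Matrix.mul_assoc, ← Matrix.mul_assoc Aᵀ A V.1, hA,
      Matrix.one_mul]
    exact V.2⟩

/-- `ξ` is the uniform (Haar) distribution on `O(p,k)`: it is characterized (uniquely) as a
rotation-invariant Borel probability measure on the Stiefel manifold. -/
def IsUniformStiefel (p k : ℕ) (ξ : Measure (Stiefel p k)) : Prop :=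
  IsProbabilityMeasure ξ ∧
    ∀ (A : Matrix (Fin p) (Fin p) ℝ) (hA : Aᵀ * A = 1),
      Measure.map (stiefelRot hA) ξ = ξ

/-- Normalizing constant of the Gibbs distribution. -/
def gibbsZ {p k : ℕ} (ξ : Measure (Stiefel p k)) (S : Matrix (Fin p) (Fin p) ℝ)
    (β : ℝ) : ℝ :=
  ∫ V : Stiefel p k, Real.exp ((p : ℝ) * β / 2 * ((V.1)ᵀ * S * V.1).trace) ∂ξ

/-- The Gibbs distribution `ν(· | S, β, k)` relative to the uniform distribution `ξ` on
`O(p,k)`. -/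
def gibbs {p k : ℕ} (ξ : Measure (Stiefel p k)) (S : Matrix (Fin p) (Fin p) ℝ)
    (β : ℝ) : Measure (Stiefel p k) :=
  ξ.withDensity fun V =>
    ENNReal.ofReal
      (Real.exp ((p : ℝ) * β / 2 * ((V.1)ᵀ * S * V.1).trace) / gibbsZ ξ S β)

/-- `eigAt l j p` is the (0-based) `j`-th entry of the decreasing eigenvalue list `l p`
(junk value `0` when `j ≥ p`). -/
def eigAt (l : ∀ p, Fin p → ℝ) (j p : ℕ) : ℝ :=
  if h : j < p then l p ⟨j, h⟩ else 0

/-- `eig1 l j` : 0-based `j`-th entry of a single eigenvalue list. -/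
def eig1 {p : ℕ} (l : Fin p → ℝ) (j : ℕ) : ℝ :=
  if h : j < p then l ⟨j, h⟩ else 0

/-- Indices of the top `k` eigenvalues. -/
def topIdx (p k : ℕ) : Finset (Fin p) := Finset.univ.filter fun i => (i : ℕ) < k

/-- Indices of the smallest `p - k` eigenvalues. -/
def bulkIdx (p k : ℕ) : Finset (Fin p) := Finset.univ.filter fun i => k ≤ (i : ℕ)

/-- Hilbert transform `H_μ(x) = ∫ dμ(t) / (x - t)`. -/
def hilbert (μ : Measure ℝ) (x : ℝ) : ℝ := ∫ t, (x - t)⁻¹ ∂μ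

/-- Derivative of the Hilbert transform, `H'_μ(x) = -∫ dμ(t) / (x - t)²`. -/
def hilbertDeriv (μ : Measure ℝ) (x : ℝ) : ℝ := -∫ t, ((x - t) ^ 2)⁻¹ ∂μ

/-- Assumption (MAT) on a sequence of symmetric matrices `S p`, presented together with (any)
orthogonal eigendecomposition `S p = U p * diagonal (l p) * (U p)ᵀ` with decreasing
eigenvalues `l p`.  The limits are `γ 1 ≥ ⋯ ≥ γ k > γ (k+1) > 0` (1-based indexing) and the
limiting spectral measure is `μ`, a probability measure with compact support contained in
`(-∞, γ (k+1)]`. -/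
def AssumptionMAT (k : ℕ) (γ : ℕ → ℝ) (μ : Measure ℝ)
    (S : ∀ p, Matrix (Fin p) (Fin p) ℝ) (l : ∀ p, Fin p → ℝ)
    (U : ∀ p, Matrix (Fin p) (Fin p) ℝ) : Prop :=
  0 < k ∧
  (∀ p, (U p)ᵀ * U p = 1) ∧
  (∀ p, S p = U p * Matrix.diagonal (l p) * (U p)ᵀ) ∧
  (∀ p, Antitone (l p)) ∧
  (∀ i j : ℕ, 1 ≤ i → i ≤ j → j ≤ k + 1 → γ j ≤ γ i) ∧
  γ (k + 1) < γ k ∧ 0 < γ (k + 1) ∧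
  IsProbabilityMeasure μ ∧
  (∃ a : ℝ, μ (Set.Icc a (γ (k + 1)))ᶜ = 0) ∧
  (∀ i : ℕ, 1 ≤ i → i ≤ k + 1 →
    Tendsto (fun p : ℕ => eigAt l (i - 1) p) atTop (nhds (γ i))) ∧
  (∀ f : BoundedContinuousFunction ℝ ℝ,
    Tendsto (fun p : ℕ => ((p : ℝ) - (k : ℝ))⁻¹ * ∑ i ∈ bulkIdx p k, f (l p i))
      atTop (nhds (∫ t, f t ∂μ)))

/-- Frobenius norm. -/
def frob {m n : Type*} [Fintype m] [Fintype n] (A : Matrix m n ℝ) : ℝ :=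
  Real.sqrt (∑ i, ∑ j, A i j ^ 2)

/-- `ℓ² → ℓ²` operator norm. -/
def opNorm {m n : Type*} [Fintype m] [Fintype n] (A : Matrix m n ℝ) : ℝ :=
  sSup {r : ℝ | ∃ x : n → ℝ, (∑ j, x j ^ 2) ≤ 1 ∧ r = Real.sqrt (∑ i, (A.mulVec x i) ^ 2)}

/-- The `p × k` matrix formed by the first `k` columns of `U` (junk `0` when `p < k`). -/
def firstCols (p k : ℕ) (U : Matrix (Fin p) (Fin p) ℝ) : Matrix (Fin p) (Fin k) ℝ :=
  Matrix.of fun r j => if h : (j : ℕ) < p then U r ⟨j, h⟩ else 0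

/-- The `p × (p-k)` matrix formed by the last `p - k` columns of `U`. -/
def lastCols (p k : ℕ) (U : Matrix (Fin p) (Fin p) ℝ) : Matrix (Fin p) (Fin (p - k)) ℝ :=
  Matrix.of fun r c => U r ⟨k + (c : ℕ), by have := c.isLt; omega⟩

/-- Total variation distance `sup_A |μ(A) - ν(A)|`. -/
def tvDist {Ω : Type*} [MeasurableSpace Ω] (μ ν : Measure Ω) : ℝ :=
  sSup {r : ℝ | ∃ A : Set Ω, MeasurableSet A ∧ r = |(μ A).toReal - (ν A).toReal|}

/-- Trade-off function `T(ν₀, ν₁)(α)`. -/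
def tradeoff {Ω : Type*} [MeasurableSpace Ω] (ν₀ ν₁ : Measure Ω) (α : ℝ) : ℝ :=
  sInf {r : ℝ | ∃ φ : Ω → ℝ, Measurable φ ∧ (∀ x, φ x ∈ Set.Icc (0 : ℝ) 1) ∧
    (∫ x, φ x ∂ν₀) ≤ α ∧ r = 1 - ∫ x, φ x ∂ν₁}

open Classical in
/-- Rényi divergence of order `a` of `ν₁` with respect to `ν₀` (with value `⊤` when
`ν₁` is not absolutely continuous w.r.t. `ν₀`). -/
def renyiDiv {Ω : Type*} [MeasurableSpace Ω] (a : ℝ) (ν₁ ν₀ : Measure Ω) : EReal :=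
  if ν₁ ≪ ν₀ then
    (((a - 1)⁻¹ * Real.log (∫ x, ((ν₁.rnDeriv ν₀ x).toReal) ^ a ∂ν₀) : ℝ) : EReal)
  else ⊤

/-- Sample covariance of a dataset. -/
def sampleCov (p : ℕ) (X : Multiset (Fin p → ℝ)) : Matrix (Fin p) (Fin p) ℝ :=
  ((Multiset.card X : ℝ))⁻¹ • (X.map fun x => vecMulVec x x).sum

/-- Assumption (DATA). -/
def AssumptionDATA (k : ℕ) (θ : ℝ) (γ : ℕ → ℝ) (μ : Measure ℝ)
    (X : ∀ p, Multiset (Fin p → ℝ)) (l : ∀ p, Fin p → ℝ)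
    (U : ∀ p, Matrix (Fin p) (Fin p) ℝ) : Prop :=
  0 < θ ∧
  (∀ p, ∀ x ∈ X p, (∑ j, x j ^ 2) ≤ (p : ℝ)) ∧
  Tendsto (fun p : ℕ => (Multiset.card (X p) : ℝ) / (p : ℝ) ^ ((3 : ℝ) / 2)) atTop
    (nhds θ) ∧
  AssumptionMAT k γ μ (fun p => sampleCov p (X p)) l U

open Classical in
/-- `Y` is a neighboring dataset of `X`: add one norm-bounded point or remove one point. -/
def IsNeighbor (p : ℕ) (X Y : Multiset (Fin p → ℝ)) : Prop :=
  (∃ x : Fin p → ℝ, (∑ j, x j ^ 2) ≤ (p : ℝ) ∧ Y = x ::ₘ X) ∨ ∃ x ∈ X, Y = X.erase x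

open Classical in
/-- Neighboring datasets without the norm constraint. -/
def IsNeighborFree (p : ℕ) (X Y : Multiset (Fin p → ℝ)) : Prop :=
  (∃ x : Fin p → ℝ, Y = x ::ₘ X) ∨ ∃ x ∈ X, Y = X.erase x

/-- The asymptotic privacy parameter `σ²_β` (with `Hk = H_μ(γ_k)`, `Hk' = H'_μ(γ_k)`). -/
def sigmaBetaSq (θ Δ Hk Hk' β : ℝ) : ℝ :=
  if Hk - Δ * Hk' ≤ β then
    1 / (2 * Δ * θ ^ 2) * ((β - Hk) ^ 2 / (2 * (β - Hk) + Δ * Hk'))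
  else -Hk' / (2 * θ ^ 2)

/-- Empirical Hilbert transform `H_Σ`. -/
def empH (p k : ℕ) (l : Fin p → ℝ) (x : ℝ) : ℝ :=
  ((p : ℝ))⁻¹ * ∑ i ∈ bulkIdx p k, (x - l i)⁻¹

/-- Empirical kernel `K_Σ`. -/
def empK (p k : ℕ) (l : Fin p → ℝ) (x y : ℝ) : ℝ :=
  ((p : ℝ))⁻¹ * ∑ i ∈ bulkIdx p k, ((x - l i) * (y - l i))⁻¹

/-- The variance function `σ²_Σ(E, β)`, expressed through the eigendecomposition
`Σ = U diag(l) Uᵀ` (decreasing `l`); `(Uᵀ E U) j m = u_jᵀ E u_m`. -/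
def varFun (p k : ℕ) (l : Fin p → ℝ) (U E : Matrix (Fin p) (Fin p) ℝ) (β : ℝ) : ℝ :=
  1 / 2 * ∑ j ∈ topIdx p k, ∑ m ∈ topIdx p k,
      empK p k l (l j) (l m) * ((Uᵀ * E * U) j m) ^ 2 +
    ∑ j ∈ topIdx p k, ∑ i ∈ bulkIdx p k,
      (β - empH p k l (l j)) / (l j - l i) * ((Uᵀ * E * U) i j) ^ 2

/-- `j`-th column of a square matrix. -/
def matCol {p : ℕ} (U : Matrix (Fin p) (Fin p) ℝ) (j : Fin p) : Fin p → ℝ := fun r => U r j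

/-- The centering matrix `M_β(Σ)`, via the eigendecomposition `Σ = U diag(l) Uᵀ`. -/
def centerM (p k : ℕ) (l : Fin p → ℝ) (U : Matrix (Fin p) (Fin p) ℝ) (β : ℝ) :
    Matrix (Fin p) (Fin p) ℝ :=
  (∑ j ∈ topIdx p k, (1 - empH p k l (l j) / β) • vecMulVec (matCol U j) (matCol U j)) +
    ((p : ℝ) * β)⁻¹ •
      ∑ j ∈ topIdx p k, ∑ i ∈ bulkIdx p k,
        (l j - l i)⁻¹ • vecMulVec (matCol U i) (matCol U i)

open Classical in
/-- Spectral functional calculus for symmetric matrices (junk value `0` otherwise). -/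
def matFun {k : ℕ} (f : ℝ → ℝ) (S : Matrix (Fin k) (Fin k) ℝ) :
    Matrix (Fin k) (Fin k) ℝ :=
  if hS : S.IsHermitian then
    (hS.eigenvectorUnitary : Matrix (Fin k) (Fin k) ℝ) *
        Matrix.diagonal (fun i => f (hS.eigenvalues i)) *
      star (hS.eigenvectorUnitary : Matrix (Fin k) (Fin k) ℝ)
  else 0

/-- Vertical stacking of a `k × k` block on top of a `(p-k) × k` block. -/
def vstack {p k : ℕ} (A : Matrix (Fin k) (Fin k) ℝ)
    (B : Matrix (Fin (p - k)) (Fin k) ℝ) : Matrix (Fin p) (Fin k) ℝ :=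
  Matrix.of fun r c =>
    if h : (r : ℕ) < k then A ⟨r, h⟩ c
    else B ⟨(r : ℕ) - k, by have := r.isLt; omega⟩ c

/-- The law of the Gaussian matrix `Z` with independent entries
`Z i j ∼ N(0, 1/(β p (λ_{j+1} - λ_{k+i+1})))` (paper indexing). -/
def gaussZMeasure (p k : ℕ) (l : Fin p → ℝ) (β : ℝ) :
    Measure (Matrix (Fin (p - k)) (Fin k) ℝ) :=
  Measure.pi fun _i : Fin (p - k) => Measure.pi fun _j : Fin k =>
    gaussianReal 0 (Real.toNNReal ((β * p * (eig1 l (_j : ℕ) - eig1 l (k + (_i : ℕ))))⁻¹))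

/-- Output distribution of the sampling algorithm, as a measure on `p × k` matrices. -/
def samplerLaw (p k : ℕ) (U : Matrix (Fin p) (Fin p) ℝ) (l : Fin p → ℝ) (β : ℝ)
    (κ : Measure (Stiefel k k)) : Measure (Matrix (Fin p) (Fin k) ℝ) :=
  Measure.map
    (fun QZ : Stiefel k k × Matrix (Fin (p - k)) (Fin k) ℝ =>
      U * vstack (matFun (fun t => Real.sqrt (max t 0)) (1 - (QZ.2)ᵀ * QZ.2)) QZ.2 *
        (QZ.1).1)
    (κ.prod (gaussZMeasure p k l β))

/-- `V̄⋆ = U⋆ᵀ V`. -/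
def Vbar (p k : ℕ) (U : Matrix (Fin p) (Fin p) ℝ) (V : Matrix (Fin p) (Fin k) ℝ) :
    Matrix (Fin k) (Fin k) ℝ :=
  (firstCols p k U)ᵀ * V

/-- `Q(V) = ((V̄⋆ V̄⋆ᵀ)^{1/2})⁻¹ V̄⋆` (Mathlib's matrix inverse is `0` on singular input). -/
def Qfun (p k : ℕ) (U : Matrix (Fin p) (Fin p) ℝ) (V : Matrix (Fin p) (Fin k) ℝ) :
    Matrix (Fin k) (Fin k) ℝ :=
  (matFun Real.sqrt (Vbar p k U V * (Vbar p k U V)ᵀ))⁻¹ * Vbar p k U V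

/-- `Z(V) = V̄⊥ Q(V)ᵀ`. -/
def Zfun (p k : ℕ) (U : Matrix (Fin p) (Fin p) ℝ) (V : Matrix (Fin p) (Fin k) ℝ) :
    Matrix (Fin (p - k)) (Fin k) ℝ :=
  (lastCols p k U)ᵀ * V * (Qfun p k U V)ᵀ

/-- Lebesgue measure on real matrices. -/
def matVolume (m n : ℕ) : Measure (Matrix (Fin m) (Fin n) ℝ) :=
  Measure.pi fun _ : Fin m => Measure.pi fun _ : Fin n => (volume : Measure ℝ)

open Classical in
/-- Tie-averaged, centered and normalized rank transform of the point `x` within the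
dataset `X`. -/
def rankVec (p : ℕ) (X : Multiset (Fin p → ℝ)) (x : Fin p → ℝ) : Fin p → ℝ := fun j =>
  2 / ((Multiset.card X : ℝ) - 1) *
    ((((X.filter fun y => y j < x j).card : ℝ) +
        (((X.filter fun y => y j = x j).card : ℝ) + 1) / 2) -
      ((Multiset.card X : ℝ) + 1) / 2)

/-- The rank covariance matrix `Σ_rk(X)`. -/
def rankCov (p : ℕ) (X : Multiset (Fin p → ℝ)) : Matrix (Fin p) (Fin p) ℝ :=
  sampleCov p (X.map (rankVec p X))

/-- Assumption (DATA-RANK). -/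
def AssumptionDATARank (k : ℕ) (θ : ℝ) (γ : ℕ → ℝ) (μ : Measure ℝ)
    (X : ∀ p, Multiset (Fin p → ℝ)) (l : ∀ p, Fin p → ℝ)
    (U : ∀ p, Matrix (Fin p) (Fin p) ℝ) : Prop :=
  0 < θ ∧
  Tendsto (fun p : ℕ => (Multiset.card (X p) : ℝ) / (p : ℝ) ^ ((3 : ℝ) / 2)) atTop
    (nhds θ) ∧
  AssumptionMAT k γ μ (fun p => rankCov p (X p)) l U

end

noncomputable section

/-- Empirical `H'_{Σ(X)}`. -/
def empHd (p k : ℕ) (l : Fin p → ℝ) (x : ℝ) : ℝ :=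
  -(((p : ℝ))⁻¹ * ∑ i ∈ bulkIdx p k, ((x - l i) ^ 2)⁻¹)

/-- Empirical `H''_{Σ(X)}`. -/
def empHdd (p k : ℕ) (l : Fin p → ℝ) (x : ℝ) : ℝ :=
  2 * ((p : ℝ))⁻¹ * ∑ i ∈ bulkIdx p k, ((x - l i) ^ 3)⁻¹

/-- `D(X) = n²(λ_k - λ_{k+1})/p³`. -/
def statD (p k n : ℕ) (l : Fin p → ℝ) : ℝ :=
  (n : ℝ) ^ 2 * (eig1 l (k - 1) - eig1 l k) / (p : ℝ) ^ 3

/-- `H(X) = H_{Σ(X)}(λ_k)`. -/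
def statH (p k : ℕ) (l : Fin p → ℝ) : ℝ := empH p k l (eig1 l (k - 1))

/-- `v_{ρ,D} = 6n²/(ρ²p³)`. -/
def varD (ρ : ℝ) (p n : ℕ) : ℝ := 6 * (n : ℝ) ^ 2 / (ρ ^ 2 * (p : ℝ) ^ 3)

/-- `v_{ρ,H} = 3p³ H'_{Σ(X)}(λ_k)²/(ρ²n²)`. -/
def varHv (ρ : ℝ) (p k n : ℕ) (l : Fin p → ℝ) : ℝ :=
  3 * (p : ℝ) ^ 3 * empHd p k l (eig1 l (k - 1)) ^ 2 / (ρ ^ 2 * (n : ℝ) ^ 2)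

/-- `v_{ρ,S} = 3p⁹ H''_{Σ(X)}(λ_k)²/(ρ²n⁶)`. -/
def varSv (ρ : ℝ) (p k n : ℕ) (l : Fin p → ℝ) : ℝ :=
  3 * (p : ℝ) ^ 9 * empHdd p k l (eig1 l (k - 1)) ^ 2 / (ρ ^ 2 * (n : ℝ) ^ 6)

/-- `S²_ρ(X) = -(p³/(2n²)) H'_{Σ(X)}(λ_k) + 3√(v_{ρ,S}/p)`. -/
def statS (ρ : ℝ) (p k n : ℕ) (l : Fin p → ℝ) : ℝ :=
  -((p : ℝ) ^ 3 / (2 * (n : ℝ) ^ 2)) * empHd p k l (eig1 l (k - 1)) +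
    3 * Real.sqrt (varSv ρ p k n l / p)

/-- Joint law of the privatized statistics `(D_ρ, H_ρ, S²_ρ-noised)`, three independent
Gaussians centered at the corresponding statistics with (scaled) variances `v/p`. -/
def privLaw (ρ : ℝ) (p k n : ℕ) (l : Fin p → ℝ) : Measure (ℝ × ℝ × ℝ) :=
  (gaussianReal (statD p k n l) (Real.toNNReal (varD ρ p n / p))).prod
    ((gaussianReal (statH p k l) (Real.toNNReal (varHv ρ p k n l / p))).prod
      (gaussianReal (statS ρ p k n l) (Real.toNNReal (varSv ρ p k n l / p))))

/-- `B_ρ(w², ·)` as a function of the privatized statistics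
`ω = (D_ρ, H_ρ, S²_ρ-noised)` (nonnegative parts taken via `max · 0`). -/
def Bfun (w2 : ℝ) (ω : ℝ × ℝ × ℝ) : ℝ :=
  2 * max ω.1 0 * (w2 + Real.sqrt (max (w2 ^ 2 - max ω.2.2 0 * w2) 0)) + max ω.2.1 0

end



section aux19


lemma exp_mul_pdf (m s : ℝ) (v : ℝ≥0) (hv : v ≠ 0) (x : ℝ) :
    Real.exp (s * (x - m)) * gaussianPDFReal m v x =
      Real.exp (s ^ 2 * v / 2) * gaussianPDFReal (m + s * v) v x := by
  have hv' : (v : ℝ) ≠ 0 := by exact_mod_cast hv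
  simp only [gaussianPDFReal]
  rw [show ∀ a b c : ℝ, Real.exp a * (b * Real.exp c) = b * Real.exp (a + c) by
    intro a b c; rw [Real.exp_add]; ring]
  rw [show ∀ a b c : ℝ, Real.exp a * (b * Real.exp c) = b * Real.exp (a + c) by
    intro a b c; rw [Real.exp_add]; ring]
  congr 1
  field_simp
  ring

lemma integrable_exp_mul_pdf (m s : ℝ) (v : ℝ≥0) (hv : v ≠ 0) :
    Integrable (fun x => Real.exp (s * (x - m)) * gaussianPDFReal m v x) := by
  have : (fun x => Real.exp (s * (x - m)) * gaussianPDFReal m v x) =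
      fun x => Real.exp (s ^ 2 * v / 2) * gaussianPDFReal (m + s * v) v x := by
    funext x; exact exp_mul_pdf m s v hv x
  rw [this]
  exact (integrable_gaussianPDFReal _ _).const_mul _

lemma integral_exp_mul_pdf (m s : ℝ) (v : ℝ≥0) (hv : v ≠ 0) :
    ∫ x, Real.exp (s * (x - m)) * gaussianPDFReal m v x = Real.exp (s ^ 2 * v / 2) := by
  have : (fun x => Real.exp (s * (x - m)) * gaussianPDFReal m v x) =
      fun x => Real.exp (s ^ 2 * v / 2) * gaussianPDFReal (m + s * v) v x := by
    funext x; exact exp_mul_pdf m s v hv x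
  rw [this, integral_const_mul, integral_gaussianPDFReal_eq_one _ hv, mul_one]

/-- Two-sided Gaussian tail bound with a variance upper bound `V'`. -/
lemma gauss_absTail (m : ℝ) (v : ℝ≥0) {t V' : ℝ} (ht : 0 < t) (hV' : 0 < V')
    (hvV : (v : ℝ) ≤ V') :
    gaussianReal m v {x | t ≤ |x - m|} ≤ ENNReal.ofReal (2 * Real.exp (-t ^ 2 / (2 * V'))) := by
  rcases eq_or_ne v 0 with hv | hv
  · subst hv
    rw [gaussianReal_zero_var]
    have : m ∉ {x | t ≤ |x - m|} := by simp [abs_nonneg, not_le, ht]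
    rw [Measure.dirac_apply' _ (by
      have : IsClosed {x : ℝ | t ≤ |x - m|} :=
        isClosed_le continuous_const (continuous_abs.comp (by fun_prop))
      exact this.measurableSet)]
    simp [Set.indicator_of_notMem this]
  · have hvpos : (0 : ℝ) < v := by positivity
    set s : ℝ := t / v with hs
    have hspos : 0 < s := div_pos ht hvpos
    set g : ℝ → ℝ := fun x =>
      Real.exp (-(s * t)) * ((Real.exp (s * (x - m)) + Real.exp (-(s * (x - m)))) *
        gaussianPDFReal m v x) with hg
    have hgint : Integrable g := by
      have : g = fun x => Real.exp (-(s*t)) * (Real.exp (s * (x - m)) * gaussianPDFReal m v x)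
          + Real.exp (-(s*t)) * (Real.exp ((-s) * (x - m)) * gaussianPDFReal m v x) := by
        funext x; simp only [hg]; ring_nf
      rw [this]
      exact ((integrable_exp_mul_pdf m s v hv).const_mul _).add
        ((integrable_exp_mul_pdf m (-s) v hv).const_mul _)
    have hSmeas : MeasurableSet {x : ℝ | t ≤ |x - m|} := by
      have : IsClosed {x : ℝ | t ≤ |x - m|} :=
        isClosed_le continuous_const (continuous_abs.comp (by fun_prop))
      exact this.measurableSet
    have hpt : ∀ x ∈ {x : ℝ | t ≤ |x - m|}, gaussianPDFReal m v x ≤ g x := by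
      intro x hx
      have hx' : t ≤ |x - m| := hx
      have hkey : Real.exp (s * t) ≤ Real.exp (s * (x - m)) + Real.exp (-(s * (x - m))) := by
        rcases abs_cases (x - m) with ⟨h1, _⟩ | ⟨h1, _⟩
        · have : s * t ≤ s * (x - m) := by nlinarith
          calc Real.exp (s * t) ≤ Real.exp (s * (x - m)) := Real.exp_le_exp.2 this
            _ ≤ _ := le_add_of_nonneg_right (Real.exp_pos _).le
        · have : s * t ≤ -(s * (x - m)) := by nlinarith
          calc Real.exp (s * t) ≤ Real.exp (-(s * (x - m))) := Real.exp_le_exp.2 this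
            _ ≤ _ := le_add_of_nonneg_left (Real.exp_pos _).le
      have hpdf := gaussianPDFReal_nonneg m v x
      calc gaussianPDFReal m v x
          = Real.exp (-(s*t)) * (Real.exp (s*t) * gaussianPDFReal m v x) := by
            rw [← mul_assoc, ← Real.exp_add]; simp
        _ ≤ g x := by
            simp only [hg]
            apply mul_le_mul_of_nonneg_left _ (Real.exp_pos _).le
            exact mul_le_mul_of_nonneg_right hkey hpdf
    have hint : ∫ x, g x = 2 * Real.exp (-(s * t) + s ^ 2 * v / 2) := by
      have : g = fun x => Real.exp (-(s*t)) * (Real.exp (s * (x - m)) * gaussianPDFReal m v x)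
          + Real.exp (-(s*t)) * (Real.exp ((-s) * (x - m)) * gaussianPDFReal m v x) := by
        funext x; simp only [hg]; ring_nf
      rw [this, integral_add (((integrable_exp_mul_pdf m s v hv).const_mul _))
        (((integrable_exp_mul_pdf m (-s) v hv).const_mul _)),
        integral_const_mul, integral_const_mul, integral_exp_mul_pdf m s v hv,
        integral_exp_mul_pdf m (-s) v hv]
      rw [← Real.exp_add, ← Real.exp_add]
      ring_nf
    have hexp : -(s * t) + s ^ 2 * v / 2 = -t ^ 2 / (2 * v) := by
      rw [hs]
      field_simp
      ring
    rw [gaussianReal_apply_eq_integral _ hv]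
    refine ENNReal.ofReal_le_ofReal ?_
    calc ∫ x in {x | t ≤ |x - m|}, gaussianPDFReal m v x
        ≤ ∫ x in {x | t ≤ |x - m|}, g x :=
          setIntegral_mono_on ((integrable_gaussianPDFReal m v).integrableOn)
            hgint.integrableOn hSmeas hpt
      _ ≤ ∫ x, g x := by
          refine setIntegral_le_integral hgint (ae_of_all _ fun x => ?_)
          simp only [hg]
          have := gaussianPDFReal_nonneg m v x
          positivity
      _ = 2 * Real.exp (-t ^ 2 / (2 * v)) := by rw [hint, hexp]
      _ ≤ 2 * Real.exp (-t ^ 2 / (2 * V')) := by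
          apply mul_le_mul_of_nonneg_left _ (by norm_num)
          apply Real.exp_le_exp.2
          rw [neg_div, neg_div, neg_le_neg_iff]
          apply div_le_div_of_nonneg_left (by positivity) (by positivity)
          linarith


/-- From an eventual exponential bound plus triviality `≤ 1`, get a uniform `C e^{-p/C}` bound. -/
lemma aux_combine {f : ℕ → ℝ≥0∞} (hf : ∀ p, f p ≤ 1) {K c : ℝ} (hK : 0 < K) (hc : 0 < c)
    (h : ∀ᶠ p in Filter.atTop, f p ≤ ENNReal.ofReal (K * Real.exp (-(p : ℝ) * c))) :
    ∃ C : ℝ, 0 < C ∧ ∀ p : ℕ, f p ≤ ENNReal.ofReal (C * Real.exp (-(p : ℝ) / C)) := by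
  obtain ⟨P, hP⟩ := Filter.eventually_atTop.mp h
  set C : ℝ := max (max K c⁻¹) (Real.exp P) with hC
  have hCpos : 0 < C := lt_of_lt_of_le (Real.exp_pos _) (le_max_right _ _)
  have hC1 : 1 ≤ C := le_trans (by
    simpa using Real.exp_le_exp.2 (by positivity : (0:ℝ) ≤ (P:ℝ))) (le_max_right _ _)
  have hCK : K ≤ C := le_trans (le_max_left _ _) (le_max_left _ _)
  have hCc : C⁻¹ ≤ c := by
    have : c⁻¹ ≤ C := le_trans (le_max_right _ _) (le_max_left _ _)
    rw [inv_le_comm₀ hCpos hc]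
    exact this
  refine ⟨C, hCpos, fun p => ?_⟩
  rcases le_or_gt P p with hp | hp
  · refine (hP p hp).trans (ENNReal.ofReal_le_ofReal ?_)
    have he : Real.exp (-(p : ℝ) * c) ≤ Real.exp (-(p : ℝ) / C) := by
      apply Real.exp_le_exp.2
      rw [div_eq_mul_inv, neg_mul, neg_mul, neg_le_neg_iff]
      exact mul_le_mul_of_nonneg_left hCc (by positivity)
    exact mul_le_mul hCK he (Real.exp_pos _).le (by linarith)
  · refine (hf p).trans ?_
    rw [show (1:ℝ≥0∞) = ENNReal.ofReal 1 by simp]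
    refine ENNReal.ofReal_le_ofReal ?_
    have h1 : Real.exp (-(P : ℝ)) ≤ Real.exp (-(p : ℝ) / C) := by
      apply Real.exp_le_exp.2
      rw [div_eq_mul_inv, neg_mul, neg_le_neg_iff]
      calc (p : ℝ) * C⁻¹ ≤ (P : ℝ) * 1 := by
            apply mul_le_mul (by exact_mod_cast hp.le) _ (by positivity) (by positivity)
            exact inv_le_one_of_one_le₀ hC1
        _ = (P : ℝ) := mul_one _
    calc (1:ℝ) = Real.exp (P : ℝ) * Real.exp (-(P:ℝ)) := by
          rw [← Real.exp_add]; simp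
      _ ≤ C * Real.exp (-(p : ℝ) / C) :=
          mul_le_mul (le_max_right _ _) h1 (Real.exp_pos _).le (by linarith)
section auxprod


variable {μ1 : Measure ℝ} {μ2 : Measure ℝ} {μ3 : Measure ℝ}
  [IsProbabilityMeasure μ1] [IsProbabilityMeasure μ2] [IsProbabilityMeasure μ3]

lemma prod3_coord1 (A : Set ℝ) :
    (μ1.prod (μ2.prod μ3)) {ω : ℝ × ℝ × ℝ | ω.1 ∈ A} = μ1 A := by
  have : {ω : ℝ × ℝ × ℝ | ω.1 ∈ A} = A ×ˢ (Set.univ : Set (ℝ × ℝ)) := by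
    ext ω; simp
  rw [this, Measure.prod_prod, measure_univ, mul_one]

lemma prod3_coord2 (A : Set ℝ) :
    (μ1.prod (μ2.prod μ3)) {ω : ℝ × ℝ × ℝ | ω.2.1 ∈ A} = μ2 A := by
  have : {ω : ℝ × ℝ × ℝ | ω.2.1 ∈ A} =
      (Set.univ : Set ℝ) ×ˢ (A ×ˢ (Set.univ : Set ℝ)) := by
    ext ω; simp
  rw [this, Measure.prod_prod, Measure.prod_prod, measure_univ, measure_univ,
    one_mul, mul_one]

lemma prod3_coord3 (A : Set ℝ) :
    (μ1.prod (μ2.prod μ3)) {ω : ℝ × ℝ × ℝ | ω.2.2 ∈ A} = μ3 A := by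
  have : {ω : ℝ × ℝ × ℝ | ω.2.2 ∈ A} =
      (Set.univ : Set ℝ) ×ˢ ((Set.univ : Set ℝ) ×ˢ A) := by
    ext ω; simp
  rw [this, Measure.prod_prod, Measure.prod_prod, measure_univ, measure_univ,
    one_mul, one_mul]

lemma aux_compl {Ω : Type*} [MeasurableSpace Ω] (P : Measure Ω) [IsProbabilityMeasure P]
    {A : Set Ω} (hA : MeasurableSet A) {x : ℝ} (hx : 0 ≤ x)
    (h : P Aᶜ ≤ ENNReal.ofReal x) : ENNReal.ofReal (1 - x) ≤ P A := by
  have hsum : P A + P Aᶜ = 1 := (measure_add_measure_compl hA).trans measure_univ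
  rw [ENNReal.ofReal_sub _ hx, ENNReal.ofReal_one, tsub_le_iff_right]
  calc (1 : ℝ≥0∞) = P A + P Aᶜ := hsum.symm
    _ ≤ P A + ENNReal.ofReal x := add_le_add_right h _

end auxprod



lemma card_bulkIdx (p k : ℕ) : (bulkIdx p k).card = p - k := by
  rw [show (bulkIdx p k).card = (Finset.Ico k p).card from ?_, Nat.card_Ico]
  refine Finset.card_bij (fun i _ => (i : ℕ)) ?_ ?_ ?_
  · intro i hi
    simp only [bulkIdx, Finset.mem_filter] at hi
    exact Finset.mem_Ico.2 ⟨hi.2, i.isLt⟩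
  · intro i _ j _ h; exact Fin.val_injective h
  · intro j hj
    rw [Finset.mem_Ico] at hj
    exact ⟨⟨j, hj.2⟩, by simp [bulkIdx, hj.1], rfl⟩

lemma abs_inv_sub_inv {A B δ : ℝ} (hδ : 0 < δ) (hA : δ ≤ A) (hB : δ ≤ B) :
    |A⁻¹ - B⁻¹| ≤ |A - B| / δ ^ 2 := by
  have hA0 : 0 < A := lt_of_lt_of_le hδ hA
  have hB0 : 0 < B := lt_of_lt_of_le hδ hB
  have h : A⁻¹ - B⁻¹ = (B - A) / (A * B) := by field_simp
  rw [h, abs_div, abs_sub_comm, abs_of_pos (show (0:ℝ) < A * B by positivity)]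
  refine div_le_div_of_nonneg_left (abs_nonneg _) (by positivity) ?_
  calc δ ^ 2 = δ * δ := sq δ
    _ ≤ A * B := mul_le_mul hA hB hδ.le hA0.le

lemma abs_invsq_sub_invsq {A B δ : ℝ} (hδ : 0 < δ) (hA : δ ≤ A) (hB : δ ≤ B) :
    |(A ^ 2)⁻¹ - (B ^ 2)⁻¹| ≤ 2 * |A - B| / δ ^ 3 := by
  have hA0 : 0 < A := lt_of_lt_of_le hδ hA
  have hB0 : 0 < B := lt_of_lt_of_le hδ hB
  have h : (A ^ 2)⁻¹ - (B ^ 2)⁻¹ = (A⁻¹ - B⁻¹) * (A⁻¹ + B⁻¹) := by field_simp; ring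
  rw [h, abs_mul]
  have h1 : |A⁻¹ - B⁻¹| ≤ |A - B| / δ ^ 2 := abs_inv_sub_inv hδ hA hB
  have h2 : |A⁻¹ + B⁻¹| ≤ 2 / δ := by
    rw [abs_of_pos (by positivity)]
    have : A⁻¹ ≤ δ⁻¹ := inv_anti₀ hδ hA
    have : B⁻¹ ≤ δ⁻¹ := inv_anti₀ hδ hB
    rw [show (2:ℝ)/δ = δ⁻¹ + δ⁻¹ by rw [div_eq_mul_inv]; ring]
    linarith [inv_anti₀ hδ hA]
  calc |A⁻¹ - B⁻¹| * |A⁻¹ + B⁻¹| ≤ (|A - B| / δ ^ 2) * (2 / δ) :=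
        mul_le_mul h1 h2 (abs_nonneg _) (by positivity)
    _ = 2 * |A - B| / δ ^ 3 := by field_simp

section conv
variable {k : ℕ} {γk γk1 : ℝ} {μ : Measure ℝ} {l : ∀ p, Fin p → ℝ}

/-- Eventual geometric control of the spectrum. -/
lemma eventual_spec (hγ : γk1 < γk)
    (hanti : ∀ p, Antitone (l p))
    (hlk : Filter.Tendsto (fun p => eig1 (l p) (k - 1)) Filter.atTop (nhds γk))
    (hlk1 : Filter.Tendsto (fun p => eig1 (l p) k) Filter.atTop (nhds γk1)) :
    ∀ᶠ p in Filter.atTop, k < p ∧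
      |eig1 (l p) (k - 1) - γk| ≤ (γk - γk1) / 8 ∧
      ∀ i ∈ bulkIdx p k, l p i ≤ (γk + γk1) / 2 ∧
        (γk - γk1) / 4 ≤ eig1 (l p) (k - 1) - l p i ∧
        (γk - γk1) / 4 ≤ γk - l p i := by
  have h1 : ∀ᶠ p in Filter.atTop, |eig1 (l p) (k - 1) - γk| ≤ (γk - γk1) / 8 := by
    have := Metric.tendsto_atTop.mp hlk ((γk - γk1) / 8) (by linarith)
    obtain ⟨N, hN⟩ := this
    exact Filter.eventually_atTop.2 ⟨N, fun p hp => le_of_lt (by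
      simpa [Real.dist_eq] using hN p hp)⟩
  have h2 : ∀ᶠ p in Filter.atTop, eig1 (l p) k ≤ (γk + γk1) / 2 := by
    have := Metric.tendsto_atTop.mp hlk1 ((γk - γk1) / 2) (by linarith)
    obtain ⟨N, hN⟩ := this
    refine Filter.eventually_atTop.2 ⟨N, fun p hp => ?_⟩
    have := hN p hp
    rw [Real.dist_eq, abs_lt] at this
    linarith [this.2]
  have h3 : ∀ᶠ p in Filter.atTop, k < p := Filter.eventually_atTop.2 ⟨k + 1, fun p hp => hp⟩
  filter_upwards [h1, h2, h3] with p hp1 hp2 hp3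
  refine ⟨hp3, hp1, fun i hi => ?_⟩
  simp only [bulkIdx, Finset.mem_filter] at hi
  have hle : l p i ≤ eig1 (l p) k := by
    rw [eig1, dif_pos hp3]
    exact hanti p (by exact_mod_cast hi.2 : (⟨k, hp3⟩ : Fin p) ≤ i)
  have hlc : l p i ≤ (γk + γk1) / 2 := hle.trans hp2
  have habs := abs_le.mp hp1
  refine ⟨hlc, by linarith [habs.1], by linarith⟩

/-- Key convergence: empirical Hilbert-type sums. -/
lemma empH_tendsto (hγ : γk1 < γk)
    (hanti : ∀ p, Antitone (l p))
    (hlk : Filter.Tendsto (fun p => eig1 (l p) (k - 1)) Filter.atTop (nhds γk))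
    (hlk1 : Filter.Tendsto (fun p => eig1 (l p) k) Filter.atTop (nhds γk1))
    (hweak : ∀ f : BoundedContinuousFunction ℝ ℝ,
      Filter.Tendsto (fun p : ℕ => ((p : ℝ) - (k : ℝ))⁻¹ * ∑ i ∈ bulkIdx p k, f (l p i))
        Filter.atTop (nhds (∫ t, f t ∂μ)))
    (hsupp : ∃ a : ℝ, μ (Set.Icc a γk1)ᶜ = 0) :
    Filter.Tendsto (fun p => empH p k (l p) (eig1 (l p) (k - 1))) Filter.atTop
      (nhds (hilbert μ γk)) := by
  obtain ⟨a, ha⟩ := hsupp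
  set c : ℝ := (γk + γk1) / 2 with hc
  have hcγ : c < γk := by rw [hc]; linarith
  have hγc : γk1 < c := by rw [hc]; linarith
  have hpos : ∀ t : ℝ, 0 < γk - min t c := fun t =>
    sub_pos.2 (lt_of_le_of_lt (min_le_right t c) hcγ)
  set f : BoundedContinuousFunction ℝ ℝ :=
    BoundedContinuousFunction.ofNormedAddCommGroup (fun t => (γk - min t c)⁻¹)
      (Continuous.inv₀ (continuous_const.sub (continuous_id.min continuous_const))
        (fun t => (hpos t).ne')) ((γk - c)⁻¹)
      (fun t => by
        rw [Real.norm_eq_abs, abs_of_pos (inv_pos.2 (hpos t))]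
        exact inv_anti₀ (by linarith) (by linarith [min_le_right t c])) with hf
  have hfval : ∀ t, f t = (γk - min t c)⁻¹ := fun t => rfl
  have hint : ∫ t, f t ∂μ = hilbert μ γk := by
    rw [hilbert]
    refine integral_congr_ae ?_
    have hae : ∀ᵐ t ∂μ, t ∈ Set.Icc a γk1 := by
      rw [ae_iff]
      exact measure_mono_null (fun t ht => by simpa using ht) ha
    filter_upwards [hae] with t ht
    rw [hfval, min_eq_left (le_trans ht.2 hγc.le)]
  have hA := hweak f
  rw [hint] at hA
  -- difference control
  set δ₀ : ℝ := (γk - γk1) / 4 with hδ₀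
  have hδ₀pos : 0 < δ₀ := by rw [hδ₀]; linarith
  have hdiff : ∀ᶠ p : ℕ in Filter.atTop,
      |(((p : ℝ) - (k : ℝ))⁻¹ * ∑ i ∈ bulkIdx p k, (eig1 (l p) (k-1) - l p i)⁻¹) -
        (((p : ℝ) - (k : ℝ))⁻¹ * ∑ i ∈ bulkIdx p k, f (l p i))| ≤
      |eig1 (l p) (k - 1) - γk| / δ₀ ^ 2 := by
    filter_upwards [eventual_spec hγ hanti hlk hlk1] with p hp
    obtain ⟨hkp, hnear, hbulk⟩ := hp
    have hpk : (0 : ℝ) < (p : ℝ) - (k : ℝ) := by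
      have : (k : ℝ) < (p : ℝ) := by exact_mod_cast hkp
      linarith
    rw [← mul_sub, ← Finset.sum_sub_distrib, abs_mul, abs_of_pos (inv_pos.2 hpk)]
    have hterm : ∀ i ∈ bulkIdx p k,
        |(eig1 (l p) (k-1) - l p i)⁻¹ - f (l p i)| ≤ |eig1 (l p) (k - 1) - γk| / δ₀ ^ 2 := by
      intro i hi
      obtain ⟨hic, hiA, hiB⟩ := hbulk i hi
      rw [hfval, min_eq_left hic]
      calc |(eig1 (l p) (k-1) - l p i)⁻¹ - (γk - l p i)⁻¹| ≤
          |(eig1 (l p) (k-1) - l p i) - (γk - l p i)| / δ₀ ^ 2 :=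
            abs_inv_sub_inv hδ₀pos hiA hiB
        _ = |eig1 (l p) (k - 1) - γk| / δ₀ ^ 2 := by ring_nf
    calc ((p : ℝ) - (k : ℝ))⁻¹ * |∑ i ∈ bulkIdx p k, ((eig1 (l p) (k-1) - l p i)⁻¹ - f (l p i))|
        ≤ ((p : ℝ) - (k : ℝ))⁻¹ *
          ((bulkIdx p k).card • (|eig1 (l p) (k - 1) - γk| / δ₀ ^ 2)) := by
          refine mul_le_mul_of_nonneg_left ?_ (inv_pos.2 hpk).le
          exact (Finset.abs_sum_le_sum_abs _ _).trans (Finset.sum_le_card_nsmul _ _ _ hterm)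
      _ ≤ |eig1 (l p) (k - 1) - γk| / δ₀ ^ 2 := by
          rw [card_bulkIdx, nsmul_eq_mul]
          have hcast : ((p - k : ℕ) : ℝ) = (p : ℝ) - (k : ℝ) := by
            rw [Nat.cast_sub hkp.le]
          rw [hcast, ← mul_assoc, inv_mul_cancel₀ hpk.ne', one_mul]
  have hgz : Filter.Tendsto (fun p => |eig1 (l p) (k - 1) - γk| / δ₀ ^ 2)
      Filter.atTop (nhds 0) := by
    have h1 : Filter.Tendsto (fun p => eig1 (l p) (k - 1) - γk) Filter.atTop (nhds 0) := by
      have h0 := hlk.sub (tendsto_const_nhds : Filter.Tendsto (fun _ : ℕ => γk) _ _)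
      simpa using h0
    have := (h1.abs).div_const (δ₀ ^ 2)
    simpa using this
  have hT : Filter.Tendsto
      (fun p : ℕ => ((p : ℝ) - (k : ℝ))⁻¹ * ∑ i ∈ bulkIdx p k, (eig1 (l p) (k-1) - l p i)⁻¹)
      Filter.atTop (nhds (hilbert μ γk)) := by
    have hd : Filter.Tendsto
        (fun p : ℕ => (((p : ℝ) - (k : ℝ))⁻¹ * ∑ i ∈ bulkIdx p k, (eig1 (l p) (k-1) - l p i)⁻¹) -
          (((p : ℝ) - (k : ℝ))⁻¹ * ∑ i ∈ bulkIdx p k, f (l p i)))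
        Filter.atTop (nhds 0) := squeeze_zero_norm' hdiff hgz
    have := hd.add hA
    simpa using this
  -- now convert the (p-k)⁻¹ normalization to p⁻¹
  have hfac : Filter.Tendsto (fun p : ℕ => ((p : ℝ) - (k : ℝ)) / (p : ℝ))
      Filter.atTop (nhds 1) := by
    have h1 : Filter.Tendsto (fun p : ℕ => 1 - (k : ℝ) / (p : ℝ)) Filter.atTop (nhds 1) := by
      have := tendsto_const_div_atTop_nhds_zero_nat (k : ℝ)
      simpa using tendsto_const_nhds.sub this
    refine h1.congr' ?_
    filter_upwards [Filter.eventually_atTop.2 ⟨1, fun p (hp : 1 ≤ p) => hp⟩] with p hp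
    have hp0 : (p : ℝ) ≠ 0 := by positivity
    field_simp
  have := hfac.mul hT
  rw [one_mul] at this
  refine this.congr' ?_
  filter_upwards [Filter.eventually_atTop.2 ⟨k + 1, fun p (hp : k + 1 ≤ p) => hp⟩] with p hp
  have hpk : (0 : ℝ) < (p : ℝ) - (k : ℝ) := by
    have : (k : ℝ) < (p : ℝ) := by exact_mod_cast hp
    linarith
  have hp0 : (p : ℝ) ≠ 0 := Nat.cast_ne_zero.mpr (by omega)
  rw [empH]
  rw [← mul_assoc]
  congr 1
  field_simp

/-- Key convergence: empirical derivative-Hilbert sums. -/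
lemma empHd_tendsto (hγ : γk1 < γk)
    (hanti : ∀ p, Antitone (l p))
    (hlk : Filter.Tendsto (fun p => eig1 (l p) (k - 1)) Filter.atTop (nhds γk))
    (hlk1 : Filter.Tendsto (fun p => eig1 (l p) k) Filter.atTop (nhds γk1))
    (hweak : ∀ f : BoundedContinuousFunction ℝ ℝ,
      Filter.Tendsto (fun p : ℕ => ((p : ℝ) - (k : ℝ))⁻¹ * ∑ i ∈ bulkIdx p k, f (l p i))
        Filter.atTop (nhds (∫ t, f t ∂μ)))
    (hsupp : ∃ a : ℝ, μ (Set.Icc a γk1)ᶜ = 0) :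
    Filter.Tendsto (fun p => empHd p k (l p) (eig1 (l p) (k - 1))) Filter.atTop
      (nhds (hilbertDeriv μ γk)) := by
  obtain ⟨a, ha⟩ := hsupp
  set c : ℝ := (γk + γk1) / 2 with hc
  have hcγ : c < γk := by rw [hc]; linarith
  have hγc : γk1 < c := by rw [hc]; linarith
  have hpos : ∀ t : ℝ, 0 < γk - min t c := fun t =>
    sub_pos.2 (lt_of_le_of_lt (min_le_right t c) hcγ)
  set f : BoundedContinuousFunction ℝ ℝ :=
    BoundedContinuousFunction.ofNormedAddCommGroup (fun t => ((γk - min t c) ^ 2)⁻¹)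
      (Continuous.inv₀
        ((continuous_const.sub (continuous_id.min continuous_const)).pow 2)
        (fun t => by have := hpos t; positivity))
      (((γk - c) ^ 2)⁻¹)
      (fun t => by
        have h0 := hpos t
        rw [Real.norm_eq_abs, abs_of_pos (by positivity)]
        apply inv_anti₀ (pow_pos (by linarith) 2)
        have h1 : γk - c ≤ γk - min t c := by linarith [min_le_right t c]
        exact pow_le_pow_left₀ (by linarith) h1 2) with hf
  have hfval : ∀ t, f t = ((γk - min t c) ^ 2)⁻¹ := fun t => rfl
  have hint : ∫ t, f t ∂μ = -hilbertDeriv μ γk := by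
    rw [hilbertDeriv, neg_neg]
    refine integral_congr_ae ?_
    have hae : ∀ᵐ t ∂μ, t ∈ Set.Icc a γk1 := by
      rw [ae_iff]
      exact measure_mono_null (fun t ht => by simpa using ht) ha
    filter_upwards [hae] with t ht
    rw [hfval, min_eq_left (le_trans ht.2 hγc.le)]
  have hA := hweak f
  rw [hint] at hA
  set δ₀ : ℝ := (γk - γk1) / 4 with hδ₀
  have hδ₀pos : 0 < δ₀ := by rw [hδ₀]; linarith
  have hdiff : ∀ᶠ p : ℕ in Filter.atTop,
      |(((p : ℝ) - (k : ℝ))⁻¹ * ∑ i ∈ bulkIdx p k, ((eig1 (l p) (k-1) - l p i) ^ 2)⁻¹) -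
        (((p : ℝ) - (k : ℝ))⁻¹ * ∑ i ∈ bulkIdx p k, f (l p i))| ≤
      2 * |eig1 (l p) (k - 1) - γk| / δ₀ ^ 3 := by
    filter_upwards [eventual_spec hγ hanti hlk hlk1] with p hp
    obtain ⟨hkp, hnear, hbulk⟩ := hp
    have hpk : (0 : ℝ) < (p : ℝ) - (k : ℝ) := by
      have : (k : ℝ) < (p : ℝ) := by exact_mod_cast hkp
      linarith
    rw [← mul_sub, ← Finset.sum_sub_distrib, abs_mul, abs_of_pos (inv_pos.2 hpk)]
    have hterm : ∀ i ∈ bulkIdx p k,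
        |((eig1 (l p) (k-1) - l p i) ^ 2)⁻¹ - f (l p i)| ≤
          2 * |eig1 (l p) (k - 1) - γk| / δ₀ ^ 3 := by
      intro i hi
      obtain ⟨hic, hiA, hiB⟩ := hbulk i hi
      rw [hfval, min_eq_left hic]
      calc |((eig1 (l p) (k-1) - l p i) ^ 2)⁻¹ - ((γk - l p i) ^ 2)⁻¹| ≤
          2 * |(eig1 (l p) (k-1) - l p i) - (γk - l p i)| / δ₀ ^ 3 :=
            abs_invsq_sub_invsq hδ₀pos hiA hiB
        _ = 2 * |eig1 (l p) (k - 1) - γk| / δ₀ ^ 3 := by ring_nf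
    calc ((p : ℝ) - (k : ℝ))⁻¹ *
          |∑ i ∈ bulkIdx p k, (((eig1 (l p) (k-1) - l p i) ^ 2)⁻¹ - f (l p i))|
        ≤ ((p : ℝ) - (k : ℝ))⁻¹ *
          ((bulkIdx p k).card • (2 * |eig1 (l p) (k - 1) - γk| / δ₀ ^ 3)) := by
          refine mul_le_mul_of_nonneg_left ?_ (inv_pos.2 hpk).le
          exact (Finset.abs_sum_le_sum_abs _ _).trans (Finset.sum_le_card_nsmul _ _ _ hterm)
      _ ≤ 2 * |eig1 (l p) (k - 1) - γk| / δ₀ ^ 3 := by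
          rw [card_bulkIdx, nsmul_eq_mul]
          have hcast : ((p - k : ℕ) : ℝ) = (p : ℝ) - (k : ℝ) := by
            rw [Nat.cast_sub hkp.le]
          rw [hcast, ← mul_assoc, inv_mul_cancel₀ hpk.ne', one_mul]
  have hgz : Filter.Tendsto (fun p => 2 * |eig1 (l p) (k - 1) - γk| / δ₀ ^ 3)
      Filter.atTop (nhds 0) := by
    have h0 := hlk.sub (tendsto_const_nhds : Filter.Tendsto (fun _ : ℕ => γk) _ _)
    have h1 : Filter.Tendsto (fun p => eig1 (l p) (k - 1) - γk) Filter.atTop (nhds 0) := by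
      simpa using h0
    have := ((h1.abs).const_mul 2).div_const (δ₀ ^ 3)
    simpa using this
  have hT : Filter.Tendsto
      (fun p : ℕ => ((p : ℝ) - (k : ℝ))⁻¹ *
        ∑ i ∈ bulkIdx p k, ((eig1 (l p) (k-1) - l p i) ^ 2)⁻¹)
      Filter.atTop (nhds (-hilbertDeriv μ γk)) := by
    have hd : Filter.Tendsto
        (fun p : ℕ => (((p : ℝ) - (k : ℝ))⁻¹ *
            ∑ i ∈ bulkIdx p k, ((eig1 (l p) (k-1) - l p i) ^ 2)⁻¹) -
          (((p : ℝ) - (k : ℝ))⁻¹ * ∑ i ∈ bulkIdx p k, f (l p i)))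
        Filter.atTop (nhds 0) := squeeze_zero_norm' hdiff hgz
    have := hd.add hA
    simpa using this
  have hfac : Filter.Tendsto (fun p : ℕ => ((p : ℝ) - (k : ℝ)) / (p : ℝ))
      Filter.atTop (nhds 1) := by
    have h1 : Filter.Tendsto (fun p : ℕ => 1 - (k : ℝ) / (p : ℝ)) Filter.atTop (nhds 1) := by
      have := tendsto_const_div_atTop_nhds_zero_nat (k : ℝ)
      simpa using tendsto_const_nhds.sub this
    refine h1.congr' ?_
    filter_upwards [Filter.eventually_atTop.2 ⟨1, fun p (hp : 1 ≤ p) => hp⟩] with p hp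
    have hp0 : (p : ℝ) ≠ 0 := Nat.cast_ne_zero.mpr (by omega)
    field_simp
  have hmain := (hfac.mul hT).neg
  rw [one_mul, neg_neg] at hmain
  refine hmain.congr' ?_
  filter_upwards [Filter.eventually_atTop.2 ⟨k + 1, fun p (hp : k + 1 ≤ p) => hp⟩] with p hp
  have hpk : (0 : ℝ) < (p : ℝ) - (k : ℝ) := by
    have : (k : ℝ) < (p : ℝ) := by exact_mod_cast hp
    linarith
  have hp0 : (p : ℝ) ≠ 0 := Nat.cast_ne_zero.mpr (by omega)
  rw [empHd]
  rw [neg_inj, ← mul_assoc]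
  congr 1
  field_simp

/-- Eventual bound on the empirical second-derivative sums. -/
lemma empHdd_bound (hγ : γk1 < γk)
    (hanti : ∀ p, Antitone (l p))
    (hlk : Filter.Tendsto (fun p => eig1 (l p) (k - 1)) Filter.atTop (nhds γk))
    (hlk1 : Filter.Tendsto (fun p => eig1 (l p) k) Filter.atTop (nhds γk1)) :
    ∀ᶠ p : ℕ in Filter.atTop,
      |empHdd p k (l p) (eig1 (l p) (k - 1))| ≤ 2 * (((γk - γk1) / 4) ^ 3)⁻¹ := by
  set δ₀ : ℝ := (γk - γk1) / 4 with hδ₀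
  have hδ₀pos : 0 < δ₀ := by rw [hδ₀]; linarith
  filter_upwards [eventual_spec hγ hanti hlk hlk1] with p hp
  obtain ⟨hkp, hnear, hbulk⟩ := hp
  have hp0 : (0 : ℝ) < (p : ℝ) := by exact_mod_cast (by omega : 0 < p)
  rw [empHdd, mul_assoc, abs_mul, abs_of_nonneg (by norm_num : (0:ℝ) ≤ 2)]
  rw [show |(((p:ℝ))⁻¹ * ∑ i ∈ bulkIdx p k, ((eig1 (l p) (k-1) - l p i) ^ 3)⁻¹)| =
      ((p:ℝ))⁻¹ * |∑ i ∈ bulkIdx p k, ((eig1 (l p) (k-1) - l p i) ^ 3)⁻¹| by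
    rw [abs_mul, abs_of_pos (inv_pos.2 hp0)]]
  have hterm : ∀ i ∈ bulkIdx p k,
      |((eig1 (l p) (k-1) - l p i) ^ 3)⁻¹| ≤ (δ₀ ^ 3)⁻¹ := by
    intro i hi
    obtain ⟨hic, hiA, hiB⟩ := hbulk i hi
    have h0 : 0 < eig1 (l p) (k-1) - l p i := lt_of_lt_of_le hδ₀pos hiA
    rw [abs_of_pos (by positivity)]
    exact inv_anti₀ (by positivity) (pow_le_pow_left₀ hδ₀pos.le hiA 3)
  have hsum : |∑ i ∈ bulkIdx p k, ((eig1 (l p) (k-1) - l p i) ^ 3)⁻¹| ≤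
      (bulkIdx p k).card • (δ₀ ^ 3)⁻¹ :=
    (Finset.abs_sum_le_sum_abs _ _).trans (Finset.sum_le_card_nsmul _ _ _ hterm)
  apply mul_le_mul_of_nonneg_left _ (by norm_num : (0:ℝ) ≤ 2)
  calc ((p:ℝ))⁻¹ * |∑ i ∈ bulkIdx p k, ((eig1 (l p) (k-1) - l p i) ^ 3)⁻¹|
      ≤ ((p:ℝ))⁻¹ * ((bulkIdx p k).card • (δ₀ ^ 3)⁻¹) :=
        mul_le_mul_of_nonneg_left hsum (inv_pos.2 hp0).le
    _ ≤ (δ₀ ^ 3)⁻¹ := by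
        rw [card_bulkIdx, nsmul_eq_mul]
        have h1 : ((p - k : ℕ) : ℝ) ≤ (p : ℝ) := by
          exact_mod_cast Nat.cast_le.2 (Nat.sub_le p k)
        calc ((p:ℝ))⁻¹ * (((p - k : ℕ) : ℝ) * (δ₀ ^ 3)⁻¹)
            ≤ ((p:ℝ))⁻¹ * ((p : ℝ) * (δ₀ ^ 3)⁻¹) := by
              apply mul_le_mul_of_nonneg_left _ (inv_pos.2 hp0).le
              exact mul_le_mul_of_nonneg_right h1 (by positivity)
          _ = (δ₀ ^ 3)⁻¹ := by field_simp
end conv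

end aux19


section aux19b

open Filter in
/-- Convergence of the private statistics and eventual boundedness of the variances. -/
lemma stat_conv (ρ θ : ℝ) (hρ : 0 < ρ) (hθ : 0 < θ) (k : ℕ) (γk γk1 : ℝ) (hγ : γk1 < γk)
    (μ : Measure ℝ) (l : ∀ p, Fin p → ℝ) (n : ℕ → ℕ)
    (hn : Tendsto (fun p : ℕ => (n p : ℝ) / (p : ℝ) ^ ((3 : ℝ) / 2)) atTop (nhds θ))
    (hanti : ∀ p, Antitone (l p))
    (hlk : Tendsto (fun p => eig1 (l p) (k - 1)) atTop (nhds γk))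
    (hlk1 : Tendsto (fun p => eig1 (l p) k) atTop (nhds γk1))
    (hweak : ∀ f : BoundedContinuousFunction ℝ ℝ,
      Tendsto (fun p : ℕ => ((p : ℝ) - (k : ℝ))⁻¹ * ∑ i ∈ bulkIdx p k, f (l p i))
        atTop (nhds (∫ t, f t ∂μ)))
    (hsupp : ∃ a : ℝ, μ (Set.Icc a γk1)ᶜ = 0) :
    Tendsto (fun p => statD p k (n p) (l p)) atTop (nhds (θ ^ 2 * (γk - γk1))) ∧
    Tendsto (fun p => statH p k (l p)) atTop (nhds (hilbert μ γk)) ∧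
    Tendsto (fun p => statS ρ p k (n p) (l p)) atTop
      (nhds (-hilbertDeriv μ γk / (2 * θ ^ 2))) ∧
    ∃ V : ℝ, 0 < V ∧ ∀ᶠ p : ℕ in atTop,
      varD ρ p (n p) ≤ V ∧ varHv ρ p k (n p) (l p) ≤ V ∧ varSv ρ p k (n p) (l p) ≤ V := by
  have hH := empH_tendsto hγ hanti hlk hlk1 hweak hsupp
  have hHd := empHd_tendsto hγ hanti hlk hlk1 hweak hsupp
  have hHdd := empHdd_bound hγ hanti hlk hlk1
  -- n² / p³ → θ²
  have hq : Tendsto (fun p : ℕ => (n p : ℝ) ^ 2 / (p : ℝ) ^ 3) atTop (nhds (θ ^ 2)) := by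
    have h2 := hn.pow 2
    refine h2.congr' ?_
    filter_upwards [eventually_ge_atTop 1] with p hp
    have hp0 : (0 : ℝ) ≤ (p : ℝ) := Nat.cast_nonneg p
    rw [div_pow]
    congr 1
    rw [← Real.rpow_natCast ((p : ℝ) ^ ((3 : ℝ) / 2)) 2, ← Real.rpow_mul hp0,
      ← Real.rpow_natCast (p : ℝ) 3]
    norm_num
  have hq' : Tendsto (fun p : ℕ => (p : ℝ) ^ 3 / (n p : ℝ) ^ 2) atTop
      (nhds (θ ^ 2)⁻¹) := by
    have := hq.inv₀ (by positivity)
    refine this.congr fun p => ?_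
    rw [inv_div]
  have hq9 : Tendsto (fun p : ℕ => (p : ℝ) ^ 9 / (n p : ℝ) ^ 6) atTop
      (nhds (((θ ^ 2)⁻¹) ^ 3)) := by
    have := hq'.pow 3
    refine this.congr fun p => ?_
    rw [div_pow, ← pow_mul, ← pow_mul]
  -- statD
  have hstatD : Tendsto (fun p => statD p k (n p) (l p)) atTop
      (nhds (θ ^ 2 * (γk - γk1))) := by
    refine (hq.mul (hlk.sub hlk1)).congr fun p => ?_
    rw [statD]; ring
  refine ⟨hstatD, hH, ?_, ?_⟩
  -- variances first (we need the varSv bound inside statS)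
  · -- statS
    have hvS : ∀ᶠ p : ℕ in atTop,
        varSv ρ p k (n p) (l p) ≤
          3 * (((θ ^ 2)⁻¹) ^ 3 + 1) * (2 * (((γk - γk1) / 4) ^ 3)⁻¹) ^ 2 / ρ ^ 2 := by
      have h9 : ∀ᶠ p : ℕ in atTop, (p : ℝ) ^ 9 / (n p : ℝ) ^ 6 ≤ ((θ ^ 2)⁻¹) ^ 3 + 1 :=
        hq9.eventually_le_const (lt_add_one _)
      filter_upwards [h9, hHdd] with p h1 h2
      have e1 : varSv ρ p k (n p) (l p) =
          3 * ((p : ℝ) ^ 9 / (n p : ℝ) ^ 6) * empHdd p k (l p) (eig1 (l p) (k - 1)) ^ 2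
            / ρ ^ 2 := by
        rw [varSv]; ring
      rw [e1]
      have hy : empHdd p k (l p) (eig1 (l p) (k - 1)) ^ 2 ≤
          (2 * (((γk - γk1) / 4) ^ 3)⁻¹) ^ 2 := by
        have := abs_le.mp h2
        nlinarith [this.1, this.2]
      gcongr
    have hvS0 : Tendsto (fun p : ℕ => varSv ρ p k (n p) (l p) / p) atTop (nhds 0) := by
      set M := 3 * (((θ ^ 2)⁻¹) ^ 3 + 1) * (2 * (((γk - γk1) / 4) ^ 3)⁻¹) ^ 2 / ρ ^ 2 with hM
      have hM0 : 0 ≤ M := by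
        have hδ : (0:ℝ) < (γk - γk1) / 4 := by linarith
        rw [hM]; positivity
      refine squeeze_zero_norm' ?_ (tendsto_const_div_atTop_nhds_zero_nat M)
      filter_upwards [hvS, eventually_ge_atTop 1] with p h1 hp
      have hp0 : (0 : ℝ) < (p : ℝ) := by exact_mod_cast (by omega : 0 < p)
      have hnn : 0 ≤ varSv ρ p k (n p) (l p) := by rw [varSv]; positivity
      rw [Real.norm_eq_abs, abs_of_nonneg (by positivity)]
      gcongr
    have ht2 : Tendsto (fun p : ℕ => 3 * Real.sqrt (varSv ρ p k (n p) (l p) / p))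
        atTop (nhds 0) := by
      have := (hvS0.sqrt).const_mul 3
      simpa using this
    have ht1 : Tendsto
        (fun p : ℕ => -(((p : ℝ) ^ 3 / (n p : ℝ) ^ 2) / 2 *
          empHd p k (l p) (eig1 (l p) (k - 1)))) atTop
        (nhds (-((θ ^ 2)⁻¹ / 2 * hilbertDeriv μ γk))) :=
      ((hq'.div_const 2).mul hHd).neg
    have hsum := ht1.add ht2
    rw [add_zero] at hsum
    have hval : -((θ ^ 2)⁻¹ / 2 * hilbertDeriv μ γk) = -hilbertDeriv μ γk / (2 * θ ^ 2) := by
      rw [eq_div_iff (by positivity : (2 * θ ^ 2) ≠ 0)]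
      have h1 : (θ ^ 2)⁻¹ * θ ^ 2 = 1 := inv_mul_cancel₀ (by positivity)
      linear_combination (-hilbertDeriv μ γk) * h1
    rw [hval] at hsum
    refine hsum.congr fun p => ?_
    rw [statS]; ring
  · -- variance bounds
    have hvD : Tendsto (fun p : ℕ => varD ρ p (n p)) atTop (nhds (6 * θ ^ 2 / ρ ^ 2)) := by
      refine ((hq.const_mul 6).div_const (ρ ^ 2)).congr fun p => ?_
      rw [varD]; ring
    have hvH : Tendsto (fun p : ℕ => varHv ρ p k (n p) (l p)) atTop
        (nhds (3 * (θ ^ 2)⁻¹ * hilbertDeriv μ γk ^ 2 / ρ ^ 2)) := by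
      refine (((hq'.const_mul 3).mul (hHd.pow 2)).div_const (ρ ^ 2)).congr fun p => ?_
      rw [varHv]; ring
    have hvS : ∀ᶠ p : ℕ in atTop,
        varSv ρ p k (n p) (l p) ≤
          3 * (((θ ^ 2)⁻¹) ^ 3 + 1) * (2 * (((γk - γk1) / 4) ^ 3)⁻¹) ^ 2 / ρ ^ 2 := by
      have h9 : ∀ᶠ p : ℕ in atTop, (p : ℝ) ^ 9 / (n p : ℝ) ^ 6 ≤ ((θ ^ 2)⁻¹) ^ 3 + 1 :=
        hq9.eventually_le_const (lt_add_one _)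
      filter_upwards [h9, hHdd] with p h1 h2
      have e1 : varSv ρ p k (n p) (l p) =
          3 * ((p : ℝ) ^ 9 / (n p : ℝ) ^ 6) * empHdd p k (l p) (eig1 (l p) (k - 1)) ^ 2
            / ρ ^ 2 := by
        rw [varSv]; ring
      rw [e1]
      have hy : empHdd p k (l p) (eig1 (l p) (k - 1)) ^ 2 ≤
          (2 * (((γk - γk1) / 4) ^ 3)⁻¹) ^ 2 := by
        have := abs_le.mp h2
        nlinarith [this.1, this.2]
      gcongr
    refine ⟨max (max (6 * θ ^ 2 / ρ ^ 2 + 1) (3 * (θ ^ 2)⁻¹ * hilbertDeriv μ γk ^ 2 / ρ ^ 2 + 1))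
      (3 * (((θ ^ 2)⁻¹) ^ 3 + 1) * (2 * (((γk - γk1) / 4) ^ 3)⁻¹) ^ 2 / ρ ^ 2 + 1), ?_, ?_⟩
    · refine lt_of_lt_of_le ?_ (le_max_left _ _)
      refine lt_of_lt_of_le ?_ (le_max_left _ _)
      positivity
    · filter_upwards [hvD.eventually_le_const (lt_add_one _),
        hvH.eventually_le_const (lt_add_one _), hvS] with p h1 h2 h3
      refine ⟨h1.trans ?_, h2.trans ?_, h3.trans ?_⟩
      · exact le_trans (le_max_left _ _) (le_max_left _ _)
      · exact le_trans (le_max_right _ _) (le_max_left _ _)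
      · exact le_trans (by linarith) (le_max_right _ _)


open Filter in
/-- Sequential Gaussian tail bound with variance `w p / p`. -/
lemma gauss_tail_seq {w : ℕ → ℝ} {V t : ℝ} (hV : 0 < V) (ht : 0 < t)
    (hw : ∀ᶠ p : ℕ in atTop, w p ≤ V) (m : ℕ → ℝ) :
    ∀ᶠ p : ℕ in atTop,
      gaussianReal (m p) (Real.toNNReal (w p / p)) {x | t ≤ |x - m p|} ≤
        ENNReal.ofReal (2 * Real.exp (-(p : ℝ) * (t ^ 2 / (2 * V)))) := by
  filter_upwards [hw, eventually_ge_atTop 1] with p hwp hp1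
  have hp0 : (0 : ℝ) < p := by exact_mod_cast (by omega : 0 < p)
  have hV' : 0 < V / p := by positivity
  have hcoe : ((Real.toNNReal (w p / p)) : ℝ) ≤ V / p := by
    rw [Real.coe_toNNReal']
    exact max_le (by gcongr) (by positivity)
  have h := gauss_absTail (m p) _ ht hV' hcoe
  rwa [show -t ^ 2 / (2 * (V / p)) = -(p : ℝ) * (t ^ 2 / (2 * V)) by
    field_simp] at h

lemma privLaw_coord1 (ρ : ℝ) (p k nn : ℕ) (l : Fin p → ℝ) (A : Set ℝ) :
    privLaw ρ p k nn l {ω : ℝ × ℝ × ℝ | ω.1 ∈ A} =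
      gaussianReal (statD p k nn l) (Real.toNNReal (varD ρ p nn / p)) A :=
  prod3_coord1 A

lemma privLaw_coord2 (ρ : ℝ) (p k nn : ℕ) (l : Fin p → ℝ) (A : Set ℝ) :
    privLaw ρ p k nn l {ω : ℝ × ℝ × ℝ | ω.2.1 ∈ A} =
      gaussianReal (statH p k l) (Real.toNNReal (varHv ρ p k nn l / p)) A :=
  prod3_coord2 A

lemma privLaw_coord3 (ρ : ℝ) (p k nn : ℕ) (l : Fin p → ℝ) (A : Set ℝ) :
    privLaw ρ p k nn l {ω : ℝ × ℝ × ℝ | ω.2.2 ∈ A} =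
      gaussianReal (statS ρ p k nn l) (Real.toNNReal (varSv ρ p k nn l / p)) A :=
  prod3_coord3 A

instance privLaw_prob (ρ : ℝ) (p k nn : ℕ) (l : Fin p → ℝ) :
    IsProbabilityMeasure (privLaw ρ p k nn l) := by
  unfold privLaw; infer_instance

lemma Bfun_continuous (w2 : ℝ) : Continuous (fun ω : ℝ × ℝ × ℝ => Bfun w2 ω) := by
  unfold Bfun
  have h1 : Continuous fun ω : ℝ × ℝ × ℝ => max ω.1 0 :=
    continuous_fst.max continuous_const
  have h2 : Continuous fun ω : ℝ × ℝ × ℝ => max ω.2.1 0 :=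
    (continuous_snd.fst).max continuous_const
  have h3 : Continuous fun ω : ℝ × ℝ × ℝ => max ω.2.2 0 :=
    (continuous_snd.snd).max continuous_const
  have h4 : Continuous fun ω : ℝ × ℝ × ℝ =>
      Real.sqrt (max (w2 ^ 2 - max ω.2.2 0 * w2) 0) :=
    Real.continuous_sqrt.comp
      ((continuous_const.sub (h3.mul continuous_const)).max continuous_const)
  exact ((continuous_const.mul h1).mul (continuous_const.add h4)).add h2


end aux19b

open Filter in
/-- Consistency of the privatized estimator `B_ρ(w², X)` and the private
test `T_ρ(w², X) = 1{w² ≥ S²_{ρ,+}}`, with exponentially small error probabilities.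
Here `σ²_min = -H'_μ(γ_k)/(2θ²)` and, for `w² ≥ σ²_min`,
`β(w²) = 2θ²Δ(w² + √((w²)² - σ²_min w²)) + H_μ(γ_k)`. -/
theorem statement19
    (ρ : ℝ) (hρ : 0 < ρ)
    (k : ℕ) (θ : ℝ) (γ : ℕ → ℝ) (μ : Measure ℝ)
    (X : ∀ p, Multiset (Fin p → ℝ)) (l : ∀ p, Fin p → ℝ)
    (U : ∀ p, Matrix (Fin p) (Fin p) ℝ)
    (hDATA : AssumptionDATA k θ γ μ X l U)
    (hgap : ∀ p, ∀ h : k < p, l p ⟨k, h⟩ < l p ⟨k - 1, by omega⟩) :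
    -- (1) consistency of `B_ρ(w², X)` for `w² ≥ σ²_min`
    (∀ w2 : ℝ, -hilbertDeriv μ (γ k) / (2 * θ ^ 2) ≤ w2 →
      ∀ ε : ℝ, 0 < ε → ∃ C : ℝ, 0 < C ∧
        ∀ p : ℕ,
          privLaw ρ p k (Multiset.card (X p)) (l p)
              {ω : ℝ × ℝ × ℝ |
                ε < |Bfun w2 ω -
                  (2 * θ ^ 2 * (γ k - γ (k + 1)) *
                      (w2 + Real.sqrt (w2 ^ 2 -
                        (-hilbertDeriv μ (γ k) / (2 * θ ^ 2)) * w2)) +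
                    hilbert μ (γ k))|} ≤
            ENNReal.ofReal (C * Real.exp (-(p : ℝ) / C))) ∧
    -- (2) the test accepts w.h.p. when `w² > σ²_min`
    (∀ w2 : ℝ, -hilbertDeriv μ (γ k) / (2 * θ ^ 2) < w2 →
      ∃ C : ℝ, 0 < C ∧
        ∀ p : ℕ,
          ENNReal.ofReal (1 - C * Real.exp (-(p : ℝ) / C)) ≤
            privLaw ρ p k (Multiset.card (X p)) (l p)
              {ω : ℝ × ℝ × ℝ | max ω.2.2 0 ≤ w2}) ∧
    -- (3) the test rejects w.h.p. when `w² < σ²_min`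
    (∀ w2 : ℝ, w2 < -hilbertDeriv μ (γ k) / (2 * θ ^ 2) →
      ∃ C : ℝ, 0 < C ∧
        ∀ p : ℕ,
          ENNReal.ofReal (1 - C * Real.exp (-(p : ℝ) / C)) ≤
            privLaw ρ p k (Multiset.card (X p)) (l p)
              {ω : ℝ × ℝ × ℝ | w2 < max ω.2.2 0}) := by
  
  obtain ⟨hθ, -, hcard, hMAT⟩ := hDATA
  obtain ⟨hk, -, -, hanti, -, hγgap, -, -, hsupp, heig, hweak⟩ := hMAT
  have hlk : Tendsto (fun p => eig1 (l p) (k - 1)) atTop (nhds (γ k)) :=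
    heig k hk (by omega)
  have hlk1 : Tendsto (fun p => eig1 (l p) k) atTop (nhds (γ (k + 1))) :=
    heig (k + 1) (by omega) le_rfl
  obtain ⟨hmD, hmH, hmS, V, hVpos, hvar⟩ :=
    stat_conv ρ θ hρ hθ k (γ k) (γ (k + 1)) hγgap μ l (fun p => Multiset.card (X p))
      hcard hanti hlk hlk1 hweak hsupp
  have hvarD := hvar.mono fun p h => h.1
  have hvarH := hvar.mono fun p h => h.2.1
  have hvarS := hvar.mono fun p h => h.2.2
  have hσ0 : 0 ≤ -hilbertDeriv μ (γ k) / (2 * θ ^ 2) := by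
    apply div_nonneg _ (by positivity)
    rw [hilbertDeriv, neg_neg]
    exact integral_nonneg fun t => by positivity
  have hH0 : 0 ≤ hilbert μ (γ k) := by
    rw [hilbert]
    obtain ⟨a, ha⟩ := hsupp
    refine integral_nonneg_of_ae ?_
    have hae : ∀ᵐ t ∂μ, t ∈ Set.Icc a (γ (k + 1)) := by
      rw [ae_iff]
      exact measure_mono_null (fun t ht => by simpa using ht) ha
    filter_upwards [hae] with t ht
    have h2 : 0 < γ k - t := by have := ht.2; linarith [hγgap]
    positivity
  refine ⟨?_, ?_, ?_⟩
  · -- (1)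
    intro w2 hw2 ε hε
    have hca : ContinuousAt (fun ω : ℝ × ℝ × ℝ => Bfun w2 ω)
        ((θ ^ 2 * (γ k - γ (k + 1)), hilbert μ (γ k),
          -hilbertDeriv μ (γ k) / (2 * θ ^ 2))) := (Bfun_continuous w2).continuousAt
    obtain ⟨δ, hδpos, hδ⟩ := Metric.continuousAt_iff.mp hca ε hε
    have hD0 : 0 ≤ θ ^ 2 * (γ k - γ (k + 1)) :=
      mul_nonneg (sq_nonneg θ) (by linarith [hγgap])
    have hq0 : 0 ≤ w2 ^ 2 - -hilbertDeriv μ (γ k) / (2 * θ ^ 2) * w2 := by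
      nlinarith [hσ0, hw2]
    have hBval : Bfun w2 (θ ^ 2 * (γ k - γ (k + 1)), hilbert μ (γ k),
        -hilbertDeriv μ (γ k) / (2 * θ ^ 2)) =
        2 * θ ^ 2 * (γ k - γ (k + 1)) *
          (w2 + Real.sqrt (w2 ^ 2 - -hilbertDeriv μ (γ k) / (2 * θ ^ 2) * w2)) +
          hilbert μ (γ k) := by
      show 2 * max (θ ^ 2 * (γ k - γ (k + 1))) 0 *
          (w2 + Real.sqrt (max (w2 ^ 2 -
            max (-hilbertDeriv μ (γ k) / (2 * θ ^ 2)) 0 * w2) 0)) +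
          max (hilbert μ (γ k)) 0 = _
      rw [max_eq_left hσ0, max_eq_left hq0, max_eq_left hD0, max_eq_left hH0]
      ring
    have htD := gauss_tail_seq hVpos (by positivity : (0:ℝ) < δ / 2) hvarD
      (fun p => statD p k (Multiset.card (X p)) (l p))
    have htH := gauss_tail_seq hVpos (by positivity : (0:ℝ) < δ / 2) hvarH
      (fun p => statH p k (l p))
    have htS := gauss_tail_seq hVpos (by positivity : (0:ℝ) < δ / 2) hvarS
      (fun p => statS ρ p k (Multiset.card (X p)) (l p))
    have hcD : ∀ᶠ p : ℕ in atTop,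
        |statD p k (Multiset.card (X p)) (l p) - θ ^ 2 * (γ k - γ (k + 1))| < δ / 2 := by
      have := Metric.tendsto_nhds.mp hmD (δ / 2) (by positivity)
      simpa [Real.dist_eq] using this
    have hcH : ∀ᶠ p : ℕ in atTop,
        |statH p k (l p) - hilbert μ (γ k)| < δ / 2 := by
      have := Metric.tendsto_nhds.mp hmH (δ / 2) (by positivity)
      simpa [Real.dist_eq] using this
    have hcS : ∀ᶠ p : ℕ in atTop,
        |statS ρ p k (Multiset.card (X p)) (l p) -
          -hilbertDeriv μ (γ k) / (2 * θ ^ 2)| < δ / 2 := by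
      have := Metric.tendsto_nhds.mp hmS (δ / 2) (by positivity)
      simpa [Real.dist_eq] using this
    have hmain : ∀ᶠ p : ℕ in atTop,
        privLaw ρ p k (Multiset.card (X p)) (l p)
          {ω : ℝ × ℝ × ℝ |
            ε < |Bfun w2 ω -
              (2 * θ ^ 2 * (γ k - γ (k + 1)) *
                  (w2 + Real.sqrt (w2 ^ 2 -
                    (-hilbertDeriv μ (γ k) / (2 * θ ^ 2)) * w2)) +
                hilbert μ (γ k))|} ≤
          ENNReal.ofReal (6 * Real.exp (-(p : ℝ) * ((δ / 2) ^ 2 / (2 * V)))) := by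
      filter_upwards [htD, htH, htS, hcD, hcH, hcS] with p t1 t2 t3 c1 c2 c3
      have hsub : {ω : ℝ × ℝ × ℝ |
            ε < |Bfun w2 ω -
              (2 * θ ^ 2 * (γ k - γ (k + 1)) *
                  (w2 + Real.sqrt (w2 ^ 2 -
                    (-hilbertDeriv μ (γ k) / (2 * θ ^ 2)) * w2)) +
                hilbert μ (γ k))|} ⊆
          {ω : ℝ × ℝ × ℝ |
            ω.1 ∈ {x : ℝ | δ / 2 ≤ |x - statD p k (Multiset.card (X p)) (l p)|}} ∪
          ({ω : ℝ × ℝ × ℝ |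
            ω.2.1 ∈ {x : ℝ | δ / 2 ≤ |x - statH p k (l p)|}} ∪
           {ω : ℝ × ℝ × ℝ |
            ω.2.2 ∈ {x : ℝ | δ / 2 ≤ |x - statS ρ p k (Multiset.card (X p)) (l p)|}}) := by
        intro ω hω
        by_contra hcon
        simp only [Set.mem_union, Set.mem_setOf_eq, not_or, not_le] at hcon
        obtain ⟨g1, g2, g3⟩ := hcon
        have hd1 : dist ω.1 (θ ^ 2 * (γ k - γ (k + 1))) < δ := by
          rw [Real.dist_eq]
          calc |ω.1 - θ ^ 2 * (γ k - γ (k + 1))| ≤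
              |ω.1 - statD p k (Multiset.card (X p)) (l p)| +
                |statD p k (Multiset.card (X p)) (l p) - θ ^ 2 * (γ k - γ (k + 1))| :=
              abs_sub_le _ _ _
            _ < δ := by linarith
        have hd2 : dist ω.2.1 (hilbert μ (γ k)) < δ := by
          rw [Real.dist_eq]
          calc |ω.2.1 - hilbert μ (γ k)| ≤
              |ω.2.1 - statH p k (l p)| + |statH p k (l p) - hilbert μ (γ k)| :=
              abs_sub_le _ _ _
            _ < δ := by linarith
        have hd3 : dist ω.2.2 (-hilbertDeriv μ (γ k) / (2 * θ ^ 2)) < δ := by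
          rw [Real.dist_eq]
          calc |ω.2.2 - -hilbertDeriv μ (γ k) / (2 * θ ^ 2)| ≤
              |ω.2.2 - statS ρ p k (Multiset.card (X p)) (l p)| +
                |statS ρ p k (Multiset.card (X p)) (l p) -
                  -hilbertDeriv μ (γ k) / (2 * θ ^ 2)| :=
              abs_sub_le _ _ _
            _ < δ := by linarith
        have hdist : dist ω (θ ^ 2 * (γ k - γ (k + 1)), hilbert μ (γ k),
            -hilbertDeriv μ (γ k) / (2 * θ ^ 2)) < δ := by
          rw [Prod.dist_eq]
          refine max_lt hd1 ?_
          rw [Prod.dist_eq]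
          exact max_lt hd2 hd3
        have hlt := hδ hdist
        rw [Real.dist_eq, hBval] at hlt
        simp only [Set.mem_setOf_eq] at hω
        linarith
      calc privLaw ρ p k (Multiset.card (X p)) (l p) _ ≤
          privLaw ρ p k (Multiset.card (X p)) (l p)
            ({ω : ℝ × ℝ × ℝ |
              ω.1 ∈ {x : ℝ | δ / 2 ≤ |x - statD p k (Multiset.card (X p)) (l p)|}} ∪
            ({ω : ℝ × ℝ × ℝ |
              ω.2.1 ∈ {x : ℝ | δ / 2 ≤ |x - statH p k (l p)|}} ∪
             {ω : ℝ × ℝ × ℝ |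
              ω.2.2 ∈ {x : ℝ | δ / 2 ≤
                |x - statS ρ p k (Multiset.card (X p)) (l p)|}})) :=
            measure_mono hsub
        _ ≤ privLaw ρ p k (Multiset.card (X p)) (l p)
              {ω : ℝ × ℝ × ℝ |
                ω.1 ∈ {x : ℝ | δ / 2 ≤ |x - statD p k (Multiset.card (X p)) (l p)|}} +
            (privLaw ρ p k (Multiset.card (X p)) (l p)
              {ω : ℝ × ℝ × ℝ | ω.2.1 ∈ {x : ℝ | δ / 2 ≤ |x - statH p k (l p)|}} +
             privLaw ρ p k (Multiset.card (X p)) (l p)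
              {ω : ℝ × ℝ × ℝ |
                ω.2.2 ∈ {x : ℝ | δ / 2 ≤
                  |x - statS ρ p k (Multiset.card (X p)) (l p)|}}) :=
            (measure_union_le _ _).trans (add_le_add_right (measure_union_le _ _) _)
        _ ≤ ENNReal.ofReal (2 * Real.exp (-(p : ℝ) * ((δ / 2) ^ 2 / (2 * V)))) +
            (ENNReal.ofReal (2 * Real.exp (-(p : ℝ) * ((δ / 2) ^ 2 / (2 * V)))) +
             ENNReal.ofReal (2 * Real.exp (-(p : ℝ) * ((δ / 2) ^ 2 / (2 * V))))) := by
            rw [privLaw_coord1, privLaw_coord2, privLaw_coord3]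
            exact add_le_add t1 (add_le_add t2 t3)
        _ = ENNReal.ofReal (6 * Real.exp (-(p : ℝ) * ((δ / 2) ^ 2 / (2 * V)))) := by
            rw [← ENNReal.ofReal_add (by positivity) (by positivity),
              ← ENNReal.ofReal_add (by positivity) (by positivity)]
            congr 1
            ring
    exact aux_combine (fun p => prob_le_one) (by norm_num : (0:ℝ) < 6)
      (by positivity) hmain
  · -- (2)
    intro w2 hw2
    have hw2pos : 0 < w2 := lt_of_le_of_lt hσ0 hw2
    have hd : (0:ℝ) < (w2 - -hilbertDeriv μ (γ k) / (2 * θ ^ 2)) / 2 := by linarith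
    have hAmeas : MeasurableSet {ω : ℝ × ℝ × ℝ | max ω.2.2 0 ≤ w2} :=
      measurableSet_le ((measurable_snd.snd).max measurable_const) measurable_const
    have htS := gauss_tail_seq hVpos hd hvarS
      (fun p => statS ρ p k (Multiset.card (X p)) (l p))
    have hcS : ∀ᶠ p : ℕ in atTop,
        |statS ρ p k (Multiset.card (X p)) (l p) -
          -hilbertDeriv μ (γ k) / (2 * θ ^ 2)| <
          (w2 - -hilbertDeriv μ (γ k) / (2 * θ ^ 2)) / 2 := by
      have := Metric.tendsto_nhds.mp hmS _ hd
      simpa [Real.dist_eq] using this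
    have hmain : ∀ᶠ p : ℕ in atTop,
        privLaw ρ p k (Multiset.card (X p)) (l p)
          {ω : ℝ × ℝ × ℝ | max ω.2.2 0 ≤ w2}ᶜ ≤
        ENNReal.ofReal (2 * Real.exp (-(p : ℝ) *
          (((w2 - -hilbertDeriv μ (γ k) / (2 * θ ^ 2)) / 2) ^ 2 / (2 * V)))) := by
      filter_upwards [htS, hcS] with p t3 c3
      have hsub : {ω : ℝ × ℝ × ℝ | max ω.2.2 0 ≤ w2}ᶜ ⊆
          {ω : ℝ × ℝ × ℝ | ω.2.2 ∈ {x : ℝ |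
            (w2 - -hilbertDeriv μ (γ k) / (2 * θ ^ 2)) / 2 ≤
              |x - statS ρ p k (Multiset.card (X p)) (l p)|}} := by
        intro ω hω
        simp only [Set.mem_compl_iff, Set.mem_setOf_eq, not_le] at hω
        have hx : w2 < ω.2.2 := by
          rcases le_or_gt ω.2.2 0 with h | h
          · rw [max_eq_right h] at hω; linarith
          · rwa [max_eq_left h.le] at hω
        have habs := abs_lt.mp c3
        have hstep : (w2 - -hilbertDeriv μ (γ k) / (2 * θ ^ 2)) / 2 ≤
            ω.2.2 - statS ρ p k (Multiset.card (X p)) (l p) := by linarith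
        exact hstep.trans (le_abs_self _)
      calc privLaw ρ p k (Multiset.card (X p)) (l p)
            {ω : ℝ × ℝ × ℝ | max ω.2.2 0 ≤ w2}ᶜ ≤
          privLaw ρ p k (Multiset.card (X p)) (l p)
            {ω : ℝ × ℝ × ℝ | ω.2.2 ∈ {x : ℝ |
              (w2 - -hilbertDeriv μ (γ k) / (2 * θ ^ 2)) / 2 ≤
                |x - statS ρ p k (Multiset.card (X p)) (l p)|}} :=
            measure_mono hsub
        _ ≤ _ := by rw [privLaw_coord3]; exact t3
    obtain ⟨C, hCpos, hC⟩ := aux_combine (fun p => prob_le_one)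
      (by norm_num : (0:ℝ) < 2) (by positivity) hmain
    exact ⟨C, hCpos, fun p => aux_compl _ hAmeas (by positivity) (hC p)⟩
  · -- (3)
    intro w2 hw2
    have hd : (0:ℝ) < (-hilbertDeriv μ (γ k) / (2 * θ ^ 2) - w2) / 2 := by linarith
    have hAmeas : MeasurableSet {ω : ℝ × ℝ × ℝ | w2 < max ω.2.2 0} :=
      measurableSet_lt measurable_const ((measurable_snd.snd).max measurable_const)
    have htS := gauss_tail_seq hVpos hd hvarS
      (fun p => statS ρ p k (Multiset.card (X p)) (l p))
    have hcS : ∀ᶠ p : ℕ in atTop,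
        |statS ρ p k (Multiset.card (X p)) (l p) -
          -hilbertDeriv μ (γ k) / (2 * θ ^ 2)| <
          (-hilbertDeriv μ (γ k) / (2 * θ ^ 2) - w2) / 2 := by
      have := Metric.tendsto_nhds.mp hmS _ hd
      simpa [Real.dist_eq] using this
    have hmain : ∀ᶠ p : ℕ in atTop,
        privLaw ρ p k (Multiset.card (X p)) (l p)
          {ω : ℝ × ℝ × ℝ | w2 < max ω.2.2 0}ᶜ ≤
        ENNReal.ofReal (2 * Real.exp (-(p : ℝ) *
          (((-hilbertDeriv μ (γ k) / (2 * θ ^ 2) - w2) / 2) ^ 2 / (2 * V)))) := by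
      filter_upwards [htS, hcS] with p t3 c3
      have hsub : {ω : ℝ × ℝ × ℝ | w2 < max ω.2.2 0}ᶜ ⊆
          {ω : ℝ × ℝ × ℝ | ω.2.2 ∈ {x : ℝ |
            (-hilbertDeriv μ (γ k) / (2 * θ ^ 2) - w2) / 2 ≤
              |x - statS ρ p k (Multiset.card (X p)) (l p)|}} := by
        intro ω hω
        simp only [Set.mem_compl_iff, Set.mem_setOf_eq, not_lt] at hω
        have hx : ω.2.2 ≤ w2 := (le_max_left _ _).trans hω
        have habs := abs_lt.mp c3
        have hstep : (-hilbertDeriv μ (γ k) / (2 * θ ^ 2) - w2) / 2 ≤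
            statS ρ p k (Multiset.card (X p)) (l p) - ω.2.2 := by linarith
        have := hstep.trans (le_abs_self _)
        rwa [abs_sub_comm] at this
      calc privLaw ρ p k (Multiset.card (X p)) (l p)
            {ω : ℝ × ℝ × ℝ | w2 < max ω.2.2 0}ᶜ ≤
          privLaw ρ p k (Multiset.card (X p)) (l p)
            {ω : ℝ × ℝ × ℝ | ω.2.2 ∈ {x : ℝ |
              (-hilbertDeriv μ (γ k) / (2 * θ ^ 2) - w2) / 2 ≤
                |x - statS ρ p k (Multiset.card (X p)) (l p)|}} :=
            measure_mono hsub
        _ ≤ _ := by rw [privLaw_coord3]; exact t3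
    obtain ⟨C, hCpos, hC⟩ := aux_combine (fun p => prob_le_one)
      (by norm_num : (0:ℝ) < 2) (by positivity) hmain
    exact ⟨C, hCpos, fun p => aux_compl _ hAmeas (by positivity) (hC p)⟩
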